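/- Let M and N be commensurable subgroups of a group G. Then Z̃(M ∩ N) = Z̃(M) ∩ Z̃(N) = Z̃(M) ∩ N = Z̃(N) ∩ M. -/

import Mathlib

/-- The almost center `Z̃(M)` of a subgroup `M` of `G`: the set of elements `m ∈ M` whose
centralizer in `M` has finite index in `M`. -/
def almostCenter {G : Type*} [Group G] (M : Subgroup G) : Set G :=
  {m : G | m ∈ M ∧ (Subgroup.centralizer {m}).relIndex M ≠ 0}

private lemma key {G : Type*} [Group G] {M N : Subgroup G} (hNM : N.relIndex M ≠ 0)
    (C : Subgroup G) : C.relIndex M ≠ 0 ↔ C.relIndex (M ⊓ N) ≠ 0 := by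
  constructor
  · intro hC h0
    exact hC (Subgroup.relIndex_eq_zero_of_le_right inf_le_left h0)
  · intro hC
    have h2 : (M ⊓ N).relIndex M ≠ 0 := by
      rwa [Subgroup.inf_relIndex_left]
    exact Subgroup.relIndex_ne_zero_trans hC h2

/-- If `M` and `N` are commensurable subgroups of a group `G`, then
`Z̃(M ⊓ N) = Z̃(M) ∩ Z̃(N) = Z̃(M) ∩ N = Z̃(N) ∩ M`. -/
theorem stmt4 {G : Type*} [Group G] (M N : Subgroup G) (h : Subgroup.Commensurable M N) :
    almostCenter (M ⊓ N) = almostCenter M ∩ almostCenter N ∧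
    almostCenter (M ⊓ N) = almostCenter M ∩ (N : Set G) ∧
    almostCenter (M ⊓ N) = almostCenter N ∩ (M : Set G) := by
  have hM : ∀ C : Subgroup G, C.relIndex M ≠ 0 ↔ C.relIndex (M ⊓ N) ≠ 0 := key h.2
  have hN : ∀ C : Subgroup G, C.relIndex N ≠ 0 ↔ C.relIndex (M ⊓ N) ≠ 0 := by
    intro C
    rw [inf_comm]
    exact key h.1 C
  refine ⟨?_, ?_, ?_⟩ <;> ext m <;>
    simp only [almostCenter, Set.mem_setOf_eq, Set.mem_inter_iff, Subgroup.mem_inf,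
      SetLike.mem_coe, hM, hN] <;> tauto
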